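/- For a positive integer n, equality ν_2(σ(n)) = ⌈log_2 n⌉ holds with n > 1 if and only if n is a product of distinct Mersenne primes (primes of the form 2^t - 1). -/

import Mathlib

open Finset

private lemma sum_two_pow' (n : ℕ) : (∑ i ∈ range n, 2^i) + 1 = 2^n := by
  induction n with
  | zero => simp
  | succ n ih => rw [sum_range_succ, pow_succ]; omega

-- sublemma (i)
private lemma key_i (s : Finset ℕ) :
    2 ^ (∑ t ∈ s, t) ≤ (∏ t ∈ s, (2^t - 1)) + ∑ t ∈ s, 2 ^ ((∑ u ∈ s, u) - t) := by
  classical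
  induction s using Finset.induction_on with
  | empty => simp
  | @insert a s ha ih =>
    rw [sum_insert ha, prod_insert ha, sum_insert ha]
    have hts : ∀ t ∈ s, t ≤ ∑ u ∈ s, u := fun t ht => Finset.single_le_sum (f := fun u => u) (fun _ _ => Nat.zero_le _) ht
    set T := ∑ u ∈ s, u with hT
    have hexp : ∀ t ∈ s, a + T - t = a + (T - t) := fun t ht => by
      have := hts t ht; omega
    have hsum : ∑ t ∈ s, 2 ^ (a + T - t) = 2^a * ∑ t ∈ s, 2 ^ (T - t) := by
      rw [Finset.mul_sum]
      refine Finset.sum_congr rfl fun t ht => ?_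
      rw [hexp t ht, pow_add]
    have hTa : a + T - a = T := by omega
    rw [hTa, hsum]
    set P := ∏ t ∈ s, (2^t - 1) with hP
    set Sg := ∑ t ∈ s, 2 ^ (T - t) with hSg
    have hPle : P ≤ 2^T := by
      calc P ≤ ∏ t ∈ s, 2^t := Finset.prod_le_prod' fun t _ => Nat.sub_le _ _
        _ = 2^T := Finset.prod_pow_eq_pow_sum s _ 2
    obtain ⟨B, hB⟩ : ∃ B, 2^a = B + 1 := ⟨2^a - 1, by have := Nat.one_le_two_pow (n := a); omega⟩
    rw [pow_add, hB]
    calc (B+1) * 2^T = B * 2^T + 2^T := by ring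
      _ ≤ B * (P + Sg) + 2^T := by
          have := Nat.mul_le_mul_left B ih; omega
      _ = B * P + (2^T + B * Sg) := by ring
      _ ≤ B * P + (2^T + (B+1) * Sg) := by
          have h2 : B * Sg ≤ (B+1) * Sg := Nat.mul_le_mul_right _ (by omega)
          omega
      _ = (B + 1 - 1) * P + (2^T + (B+1) * Sg) := by rw [Nat.add_sub_cancel]
-- key inequality: product of distinct Mersenne primes
private lemma mersenne_prod_lt (s : Finset ℕ)
    (h : ∀ p ∈ s, Nat.Prime p ∧ ∃ t : ℕ, p + 1 = 2 ^ t) :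
    (∏ p ∈ s, (p + 1)) + 1 ≤ 2 * ∏ p ∈ s, p := by
  classical
  rcases s.eq_empty_or_nonempty with rfl | hne
  · simp
  have hg : ∀ p ∈ s, p + 1 = 2 ^ padicValNat 2 (p + 1) ∧ 2 ≤ padicValNat 2 (p + 1) := by
    intro p hp
    obtain ⟨hpp, t, ht⟩ := h p hp
    have hv : padicValNat 2 (p + 1) = t := by rw [ht, padicValNat.prime_pow]
    have h3 : 3 ≤ p + 1 := by have := hpp.two_le; omega
    have ht2 : 2 ≤ t := by
      by_contra hlt
      interval_cases t <;> omega
    exact ⟨by rw [hv, ← ht], by rw [hv]; exact ht2⟩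
  set g : ℕ → ℕ := fun p => padicValNat 2 (p + 1) with hgdef
  have hinj : Set.InjOn g s := by
    intro p hp q hq hpq
    have h1 := (hg p hp).1
    have h2 := (hg q hq).1
    simp only [hgdef] at hpq
    rw [hpq] at h1
    omega
  set u := s.image g with hu
  have hprod1 : ∏ t ∈ u, 2 ^ t = ∏ p ∈ s, (p + 1) := by
    rw [hu, Finset.prod_image hinj]
    exact Finset.prod_congr rfl fun p hp => ((hg p hp).1).symm
  have hprod2 : ∏ t ∈ u, (2 ^ t - 1) = ∏ p ∈ s, p := by
    rw [hu, Finset.prod_image hinj]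
    refine Finset.prod_congr rfl fun p hp => ?_
    have := (hg p hp).1
    simp only [hgdef]
    omega
  have hu2 : ∀ t ∈ u, 2 ≤ t := by
    intro t ht
    obtain ⟨p, hp, rfl⟩ := Finset.mem_image.mp ht
    exact (hg p hp).2
  obtain ⟨t0, ht0⟩ := hne.image g
  set T := ∑ t ∈ u, t with hT
  have hT2 : 2 ≤ T := le_trans (hu2 t0 ht0)
    (Finset.single_le_sum (f := fun t => t) (fun _ _ => Nat.zero_le _) ht0)
  have hkey : 2 ^ T ≤ (∏ t ∈ u, (2 ^ t - 1)) + ∑ t ∈ u, 2 ^ (T - t) := key_i u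
  -- bound the sum of 2^(T-t)
  have hsub : ∀ t ∈ u, t ≤ T := fun t ht =>
    Finset.single_le_sum (f := fun t => t) (fun _ _ => Nat.zero_le _) ht
  have hsum_le : (∑ t ∈ u, 2 ^ (T - t)) + 1 ≤ 2 ^ (T - 1) := by
    have hinj2 : Set.InjOn (fun t => T - t) u := by
      intro x hx y hy hxy
      have hx' := hsub x hx
      have hy' := hsub y hy
      simp only at hxy
      omega
    have : ∑ t ∈ u, 2 ^ (T - t) = ∑ j ∈ u.image (fun t => T - t), 2 ^ j := by
      rw [Finset.sum_image hinj2]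
    rw [this]
    have hss : u.image (fun t => T - t) ⊆ range (T - 1) := by
      intro j hj
      obtain ⟨t, ht, rfl⟩ := Finset.mem_image.mp hj
      have := hu2 t ht
      have := hsub t ht
      rw [Finset.mem_range]
      omega
    have hle : ∑ j ∈ u.image (fun t => T - t), 2 ^ j ≤ ∑ j ∈ range (T - 1), 2 ^ j :=
      Finset.sum_le_sum_of_subset hss
    have := sum_two_pow' (T - 1)
    omega
  have h2T : 2 ^ T = 2 * 2 ^ (T - 1) := by
    rw [← pow_succ']
    congr 1
    omega
  have hpow : ∏ t ∈ u, 2 ^ t = 2 ^ T := Finset.prod_pow_eq_pow_sum u _ 2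
  rw [hprod2] at hkey
  rw [← hprod1, hpow]
  omega
private lemma S_mod_two (q m : ℕ) (hq : q % 2 = 1) :
    (∑ k ∈ range (m+1), q^k) % 2 = (m+1) % 2 := by
  induction m with
  | zero => norm_num
  | succ m ih =>
    rw [sum_range_succ]
    have hpow : q ^ (m+1) % 2 = 1 := by
      rw [Nat.pow_mod, hq, one_pow]
      norm_num
    omega

private lemma S_pos (q m : ℕ) (hq : 0 < q) : 0 < ∑ k ∈ range (m+1), q^k :=
  Finset.sum_pos (fun k _ => pow_pos hq k) (nonempty_range_add_one (n := m))

private lemma S_factor (q j : ℕ) :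
    ∑ k ∈ range (2*j+2), q^k = (1+q) * ∑ k ∈ range (j+1), (q^2)^k := by
  induction j with
  | zero => simp [sum_range_succ]
  | succ j ih =>
    have h : 2*(j+1)+2 = (2*j+2)+1+1 := by ring
    rw [h, sum_range_succ, sum_range_succ, ih, sum_range_succ (fun k => (q^2)^k) (j+1)]
    ring

private lemma lemA : ∀ m q : ℕ, q % 4 = 1 →
    2 ^ padicValNat 2 (∑ k ∈ range (m+1), q^k) ≤ m + 1 := by
  intro m
  induction m using Nat.strong_induction_on with
  | _ m ih =>
    intro q hq
    have hq1 : 0 < q := by omega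
    rcases Nat.even_or_odd m with he | ho
    · have heven : (m+1) % 2 = 1 := by
        obtain ⟨r, rfl⟩ := he; omega
      have hodd : (∑ k ∈ range (m+1), q^k) % 2 = 1 := by
        rw [S_mod_two q m (by omega)]; omega
      rw [padicValNat.eq_zero_of_not_dvd (by omega)]
      simp
    · obtain ⟨j, rfl⟩ : ∃ j, m = 2*j+1 := by
        obtain ⟨r, hr⟩ := ho; exact ⟨r, by omega⟩
      have h22 : 2*j+1+1 = 2*j+2 := rfl
      rw [h22, S_factor]
      have hS'pos : 0 < ∑ k ∈ range (j+1), (q^2)^k :=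
        S_pos _ _ (by positivity)
      have h1q : padicValNat 2 (1 + q) = 1 := by
        obtain ⟨c, hc⟩ : ∃ c, 1 + q = 2 * c := ⟨(1+q)/2, by omega⟩
        have hcodd : c % 2 = 1 := by omega
        rw [hc, padicValNat.mul (by omega) (by omega),
          padicValNat.self (by norm_num), padicValNat.eq_zero_of_not_dvd (by omega)]
      have hq2 : q^2 % 4 = 1 := by
        rw [Nat.pow_mod, hq]
      have hS : 2 ^ padicValNat 2 (∑ k ∈ range (j+1), (q^2)^k) ≤ j + 1 :=
        ih j (by omega) _ hq2
      rw [padicValNat.mul (by omega) (by omega), pow_add, h1q]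
      calc 2 ^ 1 * 2 ^ padicValNat 2 (∑ k ∈ range (j+1), (q^2)^k)
          ≤ 2 * (j+1) := by
            have := hS; omega
        _ = 2*j+1+1 := by ring

private lemma two_pow_le_three_pow (e : ℕ) (he : 3 ≤ e) : 2^e ≤ 3^(e-1) := by
  induction e, he using Nat.le_induction with
  | base => norm_num
  | succ e he ih =>
    have h1 : e + 1 - 1 = (e - 1) + 1 := by omega
    rw [pow_succ, h1, pow_succ]
    calc 2^e * 2 ≤ 3^(e-1) * 2 := Nat.mul_le_mul_right _ ih
      _ ≤ 3^(e-1) * 3 := Nat.mul_le_mul_left _ (by norm_num)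

private lemma succ_le_two_pow_pred (e : ℕ) (he : 3 ≤ e) : e + 1 ≤ 2^(e-1) := by
  induction e, he using Nat.le_induction with
  | base => norm_num
  | succ e he ih =>
    have h1 : e + 1 - 1 = (e - 1) + 1 := by omega
    rw [h1, pow_succ]
    omega

private lemma key_ineq (p e : ℕ) (hp : 3 ≤ p) (he : 3 ≤ e) :
    (p + 1) * (e + 1) ≤ p ^ e := by
  have h1 : (p + 1) * (e + 1) ≤ (2 * p) * 2^(e-1) := by
    have := succ_le_two_pow_pred e he
    have hpp : p + 1 ≤ 2 * p := by omega
    exact Nat.mul_le_mul hpp this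
  have h2 : (2 * p) * 2^(e-1) = p * 2^e := by
    have he1 : e - 1 + 1 = e := by omega
    calc (2*p) * 2^(e-1) = p * (2^(e-1) * 2) := by ring
      _ = p * 2^e := by rw [← pow_succ, he1]
  have h3 : p * 2^e ≤ p * 3^(e-1) := Nat.mul_le_mul_left _ (two_pow_le_three_pow e he)
  have h4 : p * 3^(e-1) ≤ p * p^(e-1) := Nat.mul_le_mul_left _ (Nat.pow_le_pow_left hp _)
  have h5 : p * p^(e-1) = p^e := by
    rw [← pow_succ']
    congr 1
    omega
  omega
private lemma bad_bound (p e : ℕ) (hp : Nat.Prime p) (he : 1 ≤ e)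
    (hbad : ¬(e = 1 ∧ ∃ t : ℕ, p + 1 = 2 ^ t)) :
    2 * 2 ^ padicValNat 2 (∑ k ∈ range (e+1), p^k) ≤ p ^ e := by
  rcases eq_or_ne p 2 with rfl | hp2
  · -- p = 2 : sum is odd
    have hodd : (∑ k ∈ range (e+1), 2^k) % 2 = 1 := by
      have := sum_two_pow' (e+1)
      have h2 : 2^(e+1) = 2 * 2^e := by rw [pow_succ]; ring
      omega
    rw [padicValNat.eq_zero_of_not_dvd (by omega)]
    have : 2 ≤ 2^e := by
      calc 2 = 2^1 := rfl
        _ ≤ 2^e := Nat.pow_le_pow_right (by norm_num) he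
    omega
  · have hodd : p % 2 = 1 := Nat.odd_iff.mp (hp.odd_of_ne_two hp2)
    have hp3 : 3 ≤ p := by have := hp.two_le; omega
    have hpe3 : 3 ≤ p ^ e := le_trans hp3 (Nat.le_self_pow (by omega) p)
    rcases Nat.even_or_odd e with hee | heo
    · -- e even : sum is odd
      have h1 : (e+1) % 2 = 1 := by obtain ⟨r, rfl⟩ := hee; omega
      have hodd2 : (∑ k ∈ range (e+1), p^k) % 2 = 1 := by
        rw [S_mod_two p e hodd]; omega
      rw [padicValNat.eq_zero_of_not_dvd (by omega)]
      omega
    · rcases eq_or_lt_of_le he with he1 | he2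
      · -- e = 1, p not Mersenne
        have hnot : ¬∃ t : ℕ, p + 1 = 2 ^ t := by
          intro ht; exact hbad ⟨he1.symm, ht⟩
        subst he1
        have hsum : ∑ k ∈ range (1+1), p^k = 1 + p := by simp [sum_range_succ]
        rw [hsum, pow_one]
        set v := padicValNat 2 (1+p) with hv
        obtain ⟨c, hc⟩ : ∃ c, 1 + p = 2^v * c := pow_padicValNat_dvd
        have hcodd : c % 2 = 1 := by
          rcases Nat.even_or_odd c with hce | hco
          · exfalso
            obtain ⟨d, rfl⟩ := hce
            have hdvd : 2 ^ (v+1) ∣ 1 + p := ⟨d, by rw [hc]; ring⟩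
            exact pow_succ_padicValNat_not_dvd (p := 2) (by omega) hdvd
          · exact Nat.odd_iff.mp hco
        have hc1 : c ≠ 1 := by
          intro h
          subst h
          exact hnot ⟨v, by omega⟩
        have hc3 : 3 ≤ c := by omega
        have h2v : 1 ≤ 2^v := Nat.one_le_two_pow
        have hmul : 2^v * 3 ≤ 2^v * c := Nat.mul_le_mul_left _ hc3
        omega
      · -- e odd, e ≥ 3
        obtain ⟨j, rfl⟩ : ∃ j, e = 2*j+1 := by
          obtain ⟨r, hr⟩ := heo; exact ⟨r, by omega⟩
        have hj1 : 1 ≤ j := by omega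
        have h22 : 2*j+1+1 = 2*j+2 := rfl
        rw [h22, S_factor]
        have hS'pos : 0 < ∑ k ∈ range (j+1), (p^2)^k := S_pos _ _ (by positivity)
        have hq2 : p^2 % 4 = 1 := by
          rw [Nat.pow_mod]
          have : p % 4 = 1 ∨ p % 4 = 3 := by omega
          rcases this with h | h <;> rw [h]
        have hS : 2 ^ padicValNat 2 (∑ k ∈ range (j+1), (p^2)^k) ≤ j + 1 :=
          lemA j (p^2) hq2
        have h1p : 2 ^ padicValNat 2 (1+p) ≤ 1 + p :=
          Nat.le_of_dvd (by omega) pow_padicValNat_dvd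
        rw [padicValNat.mul (by omega) (by omega), pow_add]
        have hki : (p + 1) * (2*j+1+1) ≤ p ^ (2*j+1) := key_ineq p (2*j+1) hp3 (by omega)
        calc 2 * (2 ^ padicValNat 2 (1+p) * 2 ^ padicValNat 2 (∑ k ∈ range (j+1), (p^2)^k))
            ≤ 2 * ((1+p) * (j+1)) := by
              have := Nat.mul_le_mul h1p hS
              omega
          _ = (p+1) * (2*j+1+1) := by ring
          _ ≤ p ^ (2*j+1) := hki
private lemma sum_divisors_prime (p : ℕ) (hp : Nat.Prime p) :
    ∑ d ∈ p.divisors, d = p + 1 := by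
  rw [hp.divisors, Finset.sum_pair hp.one_lt.ne]
  omega

private lemma sum_divisors_prod (s : Finset ℕ) (h : ∀ p ∈ s, Nat.Prime p) :
    ∑ d ∈ (∏ p ∈ s, p).divisors, d = ∏ p ∈ s, (p + 1) := by
  classical
  induction s using Finset.induction_on with
  | empty => simp
  | @insert a s ha ih =>
    rw [prod_insert ha, prod_insert ha]
    have hcop : Nat.Coprime a (∏ p ∈ s, p) := by
      apply Nat.Coprime.prod_right
      intro q hq
      exact (Nat.coprime_primes (h a (mem_insert_self a s)) (h q (mem_insert_of_mem hq))).mpr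
        (by rintro rfl; exact ha hq)
    rw [Nat.Coprime.sum_divisors_mul hcop, ih (fun p hp => h p (mem_insert_of_mem hp)),
      sum_divisors_prime a (h a (mem_insert_self a s))]

private lemma padicValNat_prod (s : Finset ℕ) (f : ℕ → ℕ) (hf : ∀ i ∈ s, f i ≠ 0) :
    padicValNat 2 (∏ i ∈ s, f i) = ∑ i ∈ s, padicValNat 2 (f i) := by
  classical
  induction s using Finset.induction_on with
  | empty => simp
  | @insert a s ha ih =>
    rw [prod_insert ha, sum_insert ha,
      padicValNat.mul (hf a (mem_insert_self a s))
        (Finset.prod_ne_zero_iff.mpr fun i hi => hf i (mem_insert_of_mem hi)),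
      ih (fun i hi => hf i (mem_insert_of_mem hi))]

-- forward (easy) direction packaged
private lemma forward_dir (s : Finset ℕ) (hne : s.Nonempty)
    (h : ∀ p ∈ s, Nat.Prime p ∧ ∃ t : ℕ, p + 1 = 2 ^ t) :
    padicValNat 2 (∑ d ∈ (∏ p ∈ s, p).divisors, d) = Nat.clog 2 (∏ p ∈ s, p) ∧
      1 < ∏ p ∈ s, p := by
  classical
  set n := ∏ p ∈ s, p with hn
  have hσ : ∑ d ∈ n.divisors, d = ∏ p ∈ s, (p + 1) :=
    sum_divisors_prod s (fun p hp => (h p hp).1)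
  have hg : ∀ p ∈ s, p + 1 = 2 ^ padicValNat 2 (p + 1) ∧ 2 ≤ padicValNat 2 (p + 1) := by
    intro p hp
    obtain ⟨hpp, t, ht⟩ := h p hp
    have hv : padicValNat 2 (p + 1) = t := by rw [ht, padicValNat.prime_pow]
    have h3 : 3 ≤ p + 1 := by have := hpp.two_le; omega
    have ht2 : 2 ≤ t := by
      by_contra hlt
      interval_cases t <;> omega
    exact ⟨by rw [hv, ← ht], by rw [hv]; exact ht2⟩
  set T := ∑ p ∈ s, padicValNat 2 (p + 1) with hT
  have hprodT : ∏ p ∈ s, (p + 1) = 2 ^ T := by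
    rw [show ∏ p ∈ s, (p + 1) = ∏ p ∈ s, 2 ^ padicValNat 2 (p + 1) from
      Finset.prod_congr rfl fun p hp => (hg p hp).1]
    exact Finset.prod_pow_eq_pow_sum s _ 2
  obtain ⟨p0, hp0⟩ := hne
  have hT2 : 2 ≤ T := le_trans (hg p0 hp0).2
    (Finset.single_le_sum (f := fun p => padicValNat 2 (p + 1)) (fun _ _ => Nat.zero_le _) hp0)
  have hp03 : 3 ≤ p0 := by
    obtain ⟨hpp, t, ht⟩ := h p0 hp0
    have := hpp.two_le
    rcases Nat.lt_or_ge p0 3 with h3 | h3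
    · interval_cases p0
      · exfalso
        rcases ht with ht
        have h2 := (hg 2 hp0).2
        have h1 := (hg 2 hp0).1
        have : (2:ℕ) + 1 = 2 ^ padicValNat 2 (2+1) := h1
        have h4 : 4 ≤ 2 ^ padicValNat 2 (2+1) := by
          calc (4:ℕ) = 2^2 := rfl
            _ ≤ _ := Nat.pow_le_pow_right (by norm_num) h2
        omega
    · exact h3
  have hn1 : 1 < n := by
    have : p0 ≤ n := Finset.single_le_prod' (fun p hp => (h p hp).1.one_lt.le) hp0
    omega
  have hle : n ≤ 2 ^ T := by
    rw [← hprodT]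
    exact Finset.prod_le_prod' fun p _ => by omega
  have hlt : 2 ^ (T - 1) < n := by
    have hL2 := mersenne_prod_lt s h
    rw [hprodT] at hL2
    have h2T : 2 ^ T = 2 * 2 ^ (T - 1) := by
      rw [← pow_succ']
      congr 1
      omega
    omega
  have hclog : Nat.clog 2 n = T := by
    have h1 : Nat.clog 2 n ≤ T := (Nat.clog_le_iff_le_pow (by norm_num)).mpr hle
    have h2 : T - 1 < Nat.clog 2 n := (Nat.lt_clog_iff_pow_lt (by norm_num)).mpr hlt
    omega
  refine ⟨?_, hn1⟩
  rw [hσ, hprodT, padicValNat.prime_pow, hclog]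
theorem val2_sigma_eq_iff (n : ℕ) (hn : 0 < n) :
    (padicValNat 2 (∑ d ∈ n.divisors, d) = Nat.clog 2 n ∧ 1 < n) ↔
      ∃ s : Finset ℕ, s.Nonempty ∧ (∀ p ∈ s, Nat.Prime p ∧ ∃ t : ℕ, p + 1 = 2 ^ t) ∧
        n = ∏ p ∈ s, p := by
  constructor
  · rintro ⟨hval, hn1⟩
    classical
    set e := n.factorization with he
    set v : ℕ → ℕ := fun p => padicValNat 2 (∑ k ∈ range (e p + 1), p^k) with hv
    have hσ : ∑ d ∈ n.divisors, d = ∏ p ∈ n.primeFactors, ∑ k ∈ range (e p + 1), p^k :=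
      Nat.sum_divisors hn.ne'
    have hterm : ∀ p ∈ n.primeFactors, (∑ k ∈ range (e p + 1), p^k) ≠ 0 := fun p hp =>
      (S_pos p _ (Nat.prime_of_mem_primeFactors hp).pos).ne'
    have hval2 : padicValNat 2 (∑ d ∈ n.divisors, d) = ∑ p ∈ n.primeFactors, v p := by
      rw [hσ, padicValNat_prod _ _ hterm]
    have hnprod : ∏ p ∈ n.primeFactors, p ^ e p = n := by
      rw [← Nat.prod_factorization_eq_prod_primeFactors (fun p k => p ^ k)]
      exact Nat.factorization_prod_pow_eq_self hn.ne'
    have hepos : ∀ p ∈ n.primeFactors, 1 ≤ e p := by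
      intro p hp
      obtain ⟨pp, pdvd, -⟩ := Nat.mem_primeFactors.mp hp
      exact (Nat.Prime.factorization_pos_of_dvd pp hn.ne' pdvd)
    by_cases hall : ∀ p ∈ n.primeFactors, e p = 1 ∧ ∃ t : ℕ, p + 1 = 2 ^ t
    · refine ⟨n.primeFactors, Nat.nonempty_primeFactors.mpr hn1,
        fun p hp => ⟨Nat.prime_of_mem_primeFactors hp, (hall p hp).2⟩, ?_⟩
      exact hnprod.symm.trans (Finset.prod_congr rfl fun p hp => by rw [(hall p hp).1, pow_one])
    · exfalso
      obtain ⟨p0, hp0, hbad0⟩ : ∃ p ∈ n.primeFactors, ¬(e p = 1 ∧ ∃ t : ℕ, p + 1 = 2 ^ t) := by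
        by_contra hc
        push_neg at hc
        exact hall hc
      set good : ℕ → Prop := fun p => e p = 1 ∧ ∃ t : ℕ, p + 1 = 2 ^ t with hgood
      set G := n.primeFactors.filter good with hG
      set B := n.primeFactors.filter (fun p => ¬ good p) with hB
      -- n ≤ 2 ^ (sum of valuations)
      have h0 : n ≤ 2 ^ ∑ p ∈ n.primeFactors, v p := by
        have := Nat.le_pow_clog (b := 2) (by norm_num) n
        rwa [← hval, hval2] at this
      have hsplit : 2 ^ ∑ p ∈ n.primeFactors, v p
          = (∏ p ∈ G, 2 ^ v p) * (∏ p ∈ B, 2 ^ v p) := by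
        rw [← Finset.prod_pow_eq_pow_sum, ← Finset.prod_filter_mul_prod_filter_not
          n.primeFactors good (fun p => 2 ^ v p)]
      have hGval : ∏ p ∈ G, 2 ^ v p = ∏ p ∈ G, (p + 1) := by
        refine Finset.prod_congr rfl fun p hp => ?_
        have hmem := Finset.mem_filter.mp hp
        have hgp : e p = 1 ∧ ∃ t : ℕ, p + 1 = 2 ^ t := hmem.2
        obtain ⟨he1, t, ht⟩ := hgp
        have hsum : ∑ k ∈ range (e p + 1), p^k = p + 1 := by
          rw [he1]
          simp [sum_range_succ]
          omega
        rw [hv]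
        simp only
        rw [hsum, ht, padicValNat.prime_pow]
      have hBle : ∏ p ∈ B, (2 * 2 ^ v p) ≤ ∏ p ∈ B, p ^ e p := by
        refine Finset.prod_le_prod' fun p hp => ?_
        have hmem := Finset.mem_filter.mp hp
        have hbad : ¬(e p = 1 ∧ ∃ t : ℕ, p + 1 = 2 ^ t) := hmem.2
        exact bad_bound p (e p) (Nat.prime_of_mem_primeFactors hmem.1) (hepos p hmem.1) hbad
      have hBsplit : ∏ p ∈ B, (2 * 2 ^ v p) = 2 ^ B.card * ∏ p ∈ B, 2 ^ v p := by
        rw [Finset.prod_mul_distrib, Finset.prod_const]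
      have hBcard : 1 ≤ B.card := Finset.card_pos.mpr ⟨p0, Finset.mem_filter.mpr ⟨hp0, hbad0⟩⟩
      have h2B : 2 ≤ 2 ^ B.card := by
        calc (2:ℕ) = 2^1 := rfl
          _ ≤ 2 ^ B.card := Nat.pow_le_pow_right (by norm_num) hBcard
      have h2c : 2 * ∏ p ∈ B, 2 ^ v p ≤ ∏ p ∈ B, p ^ e p := by
        calc 2 * ∏ p ∈ B, 2 ^ v p ≤ 2 ^ B.card * ∏ p ∈ B, 2 ^ v p :=
              Nat.mul_le_mul_right _ h2B
          _ = ∏ p ∈ B, (2 * 2 ^ v p) := hBsplit.symm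
          _ ≤ ∏ p ∈ B, p ^ e p := hBle
      have hL2 : (∏ p ∈ G, (p + 1)) + 1 ≤ 2 * ∏ p ∈ G, p := by
        refine mersenne_prod_lt G fun p hp => ?_
        have hmem := Finset.mem_filter.mp hp
        have hgp : e p = 1 ∧ ∃ t : ℕ, p + 1 = 2 ^ t := hmem.2
        exact ⟨Nat.prime_of_mem_primeFactors hmem.1, hgp.2⟩
      have hneq : n = (∏ p ∈ G, p) * ∏ p ∈ B, p ^ e p := by
        have h1 : ∏ p ∈ G, p ^ e p = ∏ p ∈ G, p := by
          refine Finset.prod_congr rfl fun p hp => ?_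
          have hgp : e p = 1 ∧ ∃ t : ℕ, p + 1 = 2 ^ t := (Finset.mem_filter.mp hp).2
          rw [hgp.1, pow_one]
        rw [← hnprod, ← Finset.prod_filter_mul_prod_filter_not
          n.primeFactors good (fun p => p ^ e p), h1]
      -- numeric contradiction
      set a := ∏ p ∈ G, (p + 1) with ha
      set b := ∏ p ∈ G, p with hb
      set c := ∏ p ∈ B, 2 ^ v p with hc
      set d := ∏ p ∈ B, p ^ e p with hd
      have hd1 : 1 ≤ d := Finset.one_le_prod' fun p hp =>
        Nat.one_le_pow _ _ (Nat.prime_of_mem_primeFactors (Finset.mem_filter.mp hp).1).pos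
      have m1 : 2 * n ≤ a * (2 * c) := by
        have : n ≤ a * c := by rw [hsplit, hGval] at h0; exact h0
        calc 2 * n ≤ 2 * (a * c) := by omega
          _ = a * (2 * c) := by ring
      have m2 : a * (2 * c) ≤ a * d := Nat.mul_le_mul_left a h2c
      have m3 : (a + 1) * d ≤ (2 * b) * d := Nat.mul_le_mul_right d hL2
      have m4 : (a + 1) * d = a * d + d := by ring
      have m5 : (2 * b) * d = 2 * n := by rw [hneq]; ring
      omega
  · rintro ⟨s, hne, h, rfl⟩
    exact forward_dir s hne h
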